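/- The projection family Q(t) := X(t)(I - f(γ(0)) wᵀ) X(t)⁻¹ is the unique 1-periodic family of rank-(n-1) projections satisfying the invariance X(t) P(0) = P(t) X(t) for all t and such that Γ(t) := X(t)(X(1)-I)X(t)⁻¹ is a bijection on Im P(t). (Uniqueness at t = 0: any projection P = I - φ μᵀ with μᵀ φ = 1, commuting appropriately with the monodromy and with X(1)-I bijective on Im P, must have φ ∈ span{f(γ(0))} and μ ∈ span{w}.) -/

import Mathlib

open Matrix


lemma vecMul_vecMulVec' {n : ℕ} (x a b : Fin n → ℝ) :
    x ᵥ* vecMulVec a b = (x ⬝ᵥ a) • b := by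
  ext j
  simp only [vecMul, dotProduct, vecMulVec_apply, Pi.smul_apply, smul_eq_mul,
    Finset.sum_mul]
  exact Finset.sum_congr rfl fun i _ => by ring

lemma vecMulVec_mulVec' {n : ℕ} (a b x : Fin n → ℝ) :
    vecMulVec a b *ᵥ x = (b ⬝ᵥ x) • a := by
  ext i
  simp only [mulVec, dotProduct, vecMulVec_apply, Pi.smul_apply, smul_eq_mul,
    Finset.mul_sum, Finset.sum_mul]
  exact Finset.sum_congr rfl fun j _ => by ring


/-- uniqueness of the invariant projection family, at `t = 0`:
in the hyperbolic periodic-orbit setup with monodromy `M`, `M v = v`,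
`wᵀ M = wᵀ`, `wᵀ v = 1` and `Γ := M - I` a bijection on `{x : wᵀ x = 0}`, any
rank-one-complement projection `P = I - φ μ₀ᵀ`, `μ₀ᵀ φ = 1`, commuting with `M`
and such that `Γ` is a bijection on `Im P = {x : μ₀ᵀ x = 0}`, must have
`φ ∈ span{v}` and `μ₀ ∈ span{w}` (with reciprocal normalization). -/
theorem projection_family_unique {n : ℕ}
    (M : Matrix (Fin n) (Fin n) ℝ) (v w : Fin n → ℝ) (hv0 : v ≠ 0)
    (hv : M *ᵥ v = v) (hw : w ᵥ* M = w) (hn : w ⬝ᵥ v = 1)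
    (hQsurj : ∀ y : Fin n → ℝ, w ⬝ᵥ y = 0 →
      ∃ x : Fin n → ℝ, w ⬝ᵥ x = 0 ∧ (M - 1) *ᵥ x = y)
    (φ μ₀ : Fin n → ℝ) (hnorm : μ₀ ⬝ᵥ φ = 1)
    (P : Matrix (Fin n) (Fin n) ℝ) (hP : P = 1 - vecMulVec φ μ₀)
    (hinvar : M * P = P * M)
    (hinj : ∀ x : Fin n → ℝ, μ₀ ⬝ᵥ x = 0 → (M - 1) *ᵥ x = 0 → x = 0)
    (hsurjP : ∀ y : Fin n → ℝ, μ₀ ⬝ᵥ y = 0 →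
      ∃ x : Fin n → ℝ, μ₀ ⬝ᵥ x = 0 ∧ (M - 1) *ᵥ x = y) :
    ∃ c : ℝ, c ≠ 0 ∧ φ = c • v ∧ c • μ₀ = w := by
  -- μ₀ᵀ P = 0
  have hμP : μ₀ ᵥ* P = 0 := by
    rw [hP, vecMul_sub, vecMul_one, vecMul_vecMulVec', hnorm, one_smul, sub_self]
  -- P *ᵥ x = x - (μ₀ ⬝ᵥ x) • φ
  have hPmul : ∀ x : Fin n → ℝ, P *ᵥ x = x - (μ₀ ⬝ᵥ x) • φ := fun x => by
    rw [hP, sub_mulVec, one_mulVec, vecMulVec_mulVec']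
  -- μ₀ ⬝ᵥ (P *ᵥ x) = 0
  have hμPv : ∀ x : Fin n → ℝ, μ₀ ⬝ᵥ (P *ᵥ x) = 0 := fun x => by
    rw [dotProduct_mulVec, hμP, zero_dotProduct]
  -- P *ᵥ v = 0
  have hPv : P *ᵥ v = 0 := by
    apply hinj _ (hμPv v)
    have : M *ᵥ (P *ᵥ v) = P *ᵥ v := by
      rw [mulVec_mulVec, hinvar, ← mulVec_mulVec, hv]
    rw [sub_mulVec, one_mulVec, this, sub_self]
  set a : ℝ := μ₀ ⬝ᵥ v with ha
  have hva : v = a • φ := by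
    have := hPmul v
    rw [hPv] at this
    linear_combination (norm := module) -this
  have ha0 : a ≠ 0 := by
    intro h
    rw [h, zero_smul] at hva
    exact hv0 hva
  refine ⟨a⁻¹, inv_ne_zero ha0, ?_, ?_⟩
  · rw [hva]
    rw [smul_smul, inv_mul_cancel₀ ha0, one_smul]
  · -- show a⁻¹ • μ₀ = w, i.e. u := w - a⁻¹ • μ₀ = 0
    have hφv : φ = a⁻¹ • v := by
      rw [hva, smul_smul, inv_mul_cancel₀ ha0, one_smul]
    -- μ₀ᵀ M = μ₀ᵀ
    have hμM : μ₀ ᵥ* M = μ₀ := by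
      have h1 : (μ₀ ᵥ* M) ᵥ* P = 0 := by
        rw [vecMul_vecMul, hinvar, ← vecMul_vecMul, hμP, zero_vecMul]
      have h2 : (μ₀ ᵥ* M) ⬝ᵥ φ = 1 := by
        rw [hφv, dotProduct_smul, ← dotProduct_mulVec, hv, ← ha, smul_eq_mul,
          inv_mul_cancel₀ ha0]
      rw [hP, vecMul_sub, vecMul_one, vecMul_vecMulVec', h2, one_smul] at h1
      linear_combination (norm := module) h1
    have hwφ : w ⬝ᵥ φ = a⁻¹ := by
      rw [hφv, dotProduct_smul, hn, smul_eq_mul, mul_one]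
    have huφ : (w - a⁻¹ • μ₀) ⬝ᵥ φ = 0 := by
      rw [sub_dotProduct, hwφ, smul_dotProduct, hnorm, smul_eq_mul, mul_one, sub_self]
    have huM : (w - a⁻¹ • μ₀) ᵥ* M = w - a⁻¹ • μ₀ := by
      rw [sub_vecMul, hw, smul_vecMul, hμM]
    have huker : ∀ y : Fin n → ℝ, μ₀ ⬝ᵥ y = 0 → (w - a⁻¹ • μ₀) ⬝ᵥ y = 0 := by
      intro y hy
      obtain ⟨x, _, hx⟩ := hsurjP y hy
      rw [← hx, dotProduct_mulVec, vecMul_sub, huM, vecMul_one, sub_self, zero_dotProduct]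
    have huz : ∀ z : Fin n → ℝ, (w - a⁻¹ • μ₀) ⬝ᵥ z = 0 := by
      intro z
      have hz : z = P *ᵥ z + (μ₀ ⬝ᵥ z) • φ := by
        rw [hPmul]; abel
      calc (w - a⁻¹ • μ₀) ⬝ᵥ z
          = (w - a⁻¹ • μ₀) ⬝ᵥ (P *ᵥ z + (μ₀ ⬝ᵥ z) • φ) := by rw [← hz]
        _ = 0 := by
            rw [dotProduct_add, huker _ (hμPv z), dotProduct_smul, huφ, smul_zero, add_zero]
    have hu0 : w - a⁻¹ • μ₀ = 0 := by
      funext i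
      simpa [dotProduct_single] using huz (Pi.single i 1)
    linear_combination (norm := module) -hu0
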